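/- Let f : 2^V → ℝ be a normalized, monotone set function on a finite ground set V and let β be an inverse generalized curvature bound for f. Let (x_1,…,x_N) be pairwise distinct elements of V and let N_1,…,N_N with N_i ⊆ {1,…,i−1} be information sets. If c ⊆ {1,…,N} is a clique of the communication graph, then (1−β)·Σ_{i ∈ c} Δ(x_i | x_{N_i}) ≤ f({x_i : i ∈ c}) ≤ f({x_1,…,x_N}). -/

import Mathlib

/-- The marginal reward of `S` given `Q`: `Δ(S|Q) = f(S ∪ Q) − f(Q)`. -/
def marg {V : Type*} [DecidableEq V] (f : Finset V → ℝ) (S Q : Finset V) : ℝ :=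
  f (S ∪ Q) - f Q

/-- A set `c` of agents is a clique of the communication graph with information sets `𝒩`
if for all `i, j ∈ c` with `j < i` we have `j ∈ 𝒩 i`. -/
def IsCommClique {N : ℕ} (𝒩 : Fin N → Finset (Fin N)) (c : Finset (Fin N)) : Prop :=
  ∀ i ∈ c, ∀ j ∈ c, j < i → j ∈ 𝒩 i

/-- Telescoping identity. -/
lemma telescope {V : Type*} [DecidableEq V] {N : ℕ}
    (f : Finset V → ℝ) (hnorm : f ∅ = 0) (x : Fin N → V) (c : Finset (Fin N)) :
    ∑ i ∈ c, marg f {x i} ((c.filter (· < i)).image x) = f (c.image x) := by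
  induction c using Finset.induction_on_max with
  | empty => simpa using hnorm.symm
  | insert a s ha ih =>
    have hna : a ∉ s := fun h => lt_irrefl a (ha a h)
    rw [Finset.sum_insert hna]
    have h1 : (insert a s).filter (· < a) = s := by
      rw [Finset.filter_insert]
      simp only [lt_irrefl, if_false]
      exact Finset.filter_true_of_mem fun b hb => ha b hb
    have h2 : ∀ i ∈ s, (insert a s).filter (· < i) = s.filter (· < i) := by
      intro i hi
      rw [Finset.filter_insert]
      have : ¬ a < i := not_lt.2 (le_of_lt (ha i hi))
      simp [this]
    rw [h1, Finset.sum_congr rfl (fun i hi => by rw [h2 i hi]), ih]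
    simp only [marg, Finset.image_insert]
    have hu : ({x a} : Finset V) ∪ Finset.image x s = insert (x a) (Finset.image x s) := by
      ext v; simp
    rw [hu]; ring

theorem clique_inverse_curvature_bound
    {V : Type*} [DecidableEq V] [Fintype V] {N : ℕ}
    (f : Finset V → ℝ)
    (hnorm : f ∅ = 0)
    (hmono : ∀ S Q : Finset V, S ⊆ Q → f S ≤ f Q)
    (β : ℝ)
    (hinv : ∀ (S Q : Finset V) (v : V), v ∈ S \ Q →
      marg f {v} (S.erase v) ≥ (1 - β) * marg f {v} ((S.erase v) ∪ Q))
    (x : Fin N → V)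
    (hxinj : Function.Injective x)
    (𝒩 : Fin N → Finset (Fin N))
    (h𝒩 : ∀ i : Fin N, ∀ j ∈ 𝒩 i, j < i)
    (c : Finset (Fin N))
    (hc : IsCommClique 𝒩 c) :
    (1 - β) * ∑ i ∈ c, marg f {x i} ((𝒩 i).image x) ≤ f (c.image x) ∧
      f (c.image x) ≤ f (Finset.univ.image x) := by
  constructor
  · rw [← telescope f hnorm x c, Finset.mul_sum]
    refine Finset.sum_le_sum fun i hi => ?_
    set P := (c.filter (· < i)).image x with hP
    set Q := (𝒩 i).image x with hQ
    have hxiP : x i ∉ P := by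
      simp only [hP, Finset.mem_image, Finset.mem_filter]
      rintro ⟨j, ⟨hjc, hji⟩, hj⟩
      exact lt_irrefl i (hxinj hj ▸ hji)
    have hxiQ : x i ∉ Q := by
      simp only [hQ, Finset.mem_image]
      rintro ⟨j, hj, hje⟩
      exact lt_irrefl i (hxinj hje ▸ h𝒩 i j hj)
    have hPQ : P ⊆ Q := by
      simp only [hP, hQ]
      refine Finset.image_subset_image ?_
      intro j hj
      rw [Finset.mem_filter] at hj
      exact hc i hi j hj.1 hj.2
    have hmem : x i ∈ (insert (x i) P) \ Q := by
      simp [hxiQ]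
    have := hinv (insert (x i) P) Q (x i) hmem
    rw [Finset.erase_insert hxiP, Finset.union_eq_right.2 hPQ] at this
    exact this
  · exact hmono _ _ (Finset.image_subset_image (Finset.subset_univ c))
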